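/- Let S = ⟨qm₁,…,qm_d, p⟩ be an extension of S₁. If p < q, then ord_S(s+p) = ord_S(s)+1 for all s∈S (note m(S) = p in this case), so by García's criterion the tangent cone G(S) is Cohen–Macaulay and consequently the Hilbert function of S is non-decreasing. -/

import Mathlib

open scoped Pointwise

/-- `S ⊆ ℕ` is a numerical semigroup: it contains `0`, is closed under
addition, and has finite complement in `ℕ`. -/
def IsNumSgp (S : Set ℕ) : Prop :=
  (0 : ℕ) ∈ S ∧ (∀ a ∈ S, ∀ b ∈ S, a + b ∈ S) ∧ {x : ℕ | x ∉ S}.Finite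

/-- `nM S t` is the `t`-fold sumset of the maximal ideal `M = S \ {0}`,
with the convention `nM S 0 = S`. -/
def nM (S : Set ℕ) : ℕ → Set ℕ
  | 0 => S
  | t + 1 => (S \ {0}) + nM S t

/-- the order of `s` with respect to `S` : the largest `t` with `s ∈ tM`. -/
noncomputable def ordS (S : Set ℕ) (s : ℕ) : ℕ := sSup {t : ℕ | s ∈ nM S t}

/-- the multiplicity of `S` : its least nonzero element. -/
noncomputable def mult (S : Set ℕ) : ℕ := sInf {x : ℕ | x ∈ S ∧ x ≠ 0}

/-- the Apéry set of `S` with respect to `x` : elements `s ∈ S` with `s - x ∉ S`. -/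
def Ap (S : Set ℕ) (x : ℕ) : Set ℕ := {s : ℕ | s ∈ S ∧ ¬ ∃ t ∈ S, s = t + x}

/-- membership of an integer in (the image in `ℤ` of) `S`. -/
def zmem (S : Set ℕ) (z : ℤ) : Prop := ∃ t ∈ S, (t : ℤ) = z

/-- the Frobenius number of `S` : the largest integer not in `S`. -/
noncomputable def Frob (S : Set ℕ) : ℤ := sSup {z : ℤ | ¬ zmem S z}

/-- `S` is symmetric: for every integer `z`, `z ∈ S` iff `F(S) - z ∉ S`. -/
def IsSymmetric (S : Set ℕ) : Prop := ∀ z : ℤ, zmem S z ↔ ¬ zmem S (Frob S - z)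

/-- the set of maximal elements of `Ap S x` with respect to the order
`u ⪯ v` iff `v = u + z` for some `z ∈ S`. -/
def MaxAp (S : Set ℕ) (x : ℕ) : Set ℕ :=
  {w : ℕ | w ∈ Ap S x ∧ ∀ y ∈ Ap S x, (∃ z ∈ S, y = w + z) → y = w}

/-- the set of maximal elements of `Ap S x` with respect to the order
`u ⪯_M v` iff `v = u + z` for some `z ∈ S` with `ord(v) = ord(u) + ord(z)`. -/
def MaxMAp (S : Set ℕ) (x : ℕ) : Set ℕ :=
  {w : ℕ | w ∈ Ap S x ∧ ∀ y ∈ Ap S x,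
    (∃ z ∈ S, y = w + z ∧ ordS S y = ordS S w + ordS S z) → y = w}

/-- `S` is M-pure with respect to `x` : all maximal elements of `Ap S x`
under `⪯_M` have the same order. -/
def MPureWrt (S : Set ℕ) (x : ℕ) : Prop :=
  ∀ w ∈ MaxMAp S x, ∀ w' ∈ MaxMAp S x, ordS S w = ordS S w'

/-- `S` is M-pure : it is M-pure with respect to its multiplicity. -/
def MPure (S : Set ℕ) : Prop := MPureWrt S (mult S)

/-- `β_i(x)` : the number of elements of `Ap S x` of order `i`. -/
noncomputable def betaS (S : Set ℕ) (x i : ℕ) : ℕ := {w ∈ Ap S x | ordS S w = i}.ncard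

/-- `d(x)` : the maximal order of an element of `Ap S x`. -/
noncomputable def dS (S : Set ℕ) (x : ℕ) : ℕ := sSup (ordS S '' Ap S x)

/-- the reduction number of `S` : the least `r` with `(r+1)M = m(S) + rM`. -/
noncomputable def redNum (S : Set ℕ) : ℕ :=
  sInf {r : ℕ | nM S (r + 1) = (fun y => mult S + y) '' nM S r}

/-- `l_x(S) = max { ord(s+x) - ord(x) - ord(s) : s ∈ S, ord(s) ≤ r }`. -/
noncomputable def lS (S : Set ℕ) (x : ℕ) : ℕ :=
  sSup {t : ℕ | ∃ s ∈ S, ordS S s ≤ redNum S ∧ t = ordS S (s + x) - ordS S x - ordS S s}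

/-- the Hilbert function of `S`. -/
noncomputable def HilbS (S : Set ℕ) (t : ℕ) : ℕ := (nM S t \ nM S (t + 1)).ncard

/-- The data of a gluing `S = ⟨q m₁, …, q m_d, p n₁, …, p n_k⟩` of two numerical
semigroups `S₁ = ⟨m₁, …, m_d⟩` and `S₂ = ⟨n₁, …, n_k⟩`, minimally generated by
`m₁ < ⋯ < m_d` and `n₁ < ⋯ < n_k`, where `p ∈ S₁ \ {m₁, …, m_d}`,
`q ∈ S₂ \ {n₁, …, n_k}` and `gcd(p, q) = 1`. -/
structure Gluing where
  d : ℕ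
  k : ℕ
  hd : 0 < d
  hk : 0 < k
  m : Fin d → ℕ
  n : Fin k → ℕ
  p : ℕ
  q : ℕ
  hm : StrictMono m
  hn : StrictMono n
  hmin₁ : ∀ i, m i ∉ AddSubmonoid.closure (Set.range m \ {m i})
  hmin₂ : ∀ j, n j ∉ AddSubmonoid.closure (Set.range n \ {n j})
  hnum₁ : IsNumSgp (AddSubmonoid.closure (Set.range m) : Set ℕ)
  hnum₂ : IsNumSgp (AddSubmonoid.closure (Set.range n) : Set ℕ)
  hp : p ∈ AddSubmonoid.closure (Set.range m)
  hq : q ∈ AddSubmonoid.closure (Set.range n)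
  hpm : p ∉ Set.range m
  hqn : q ∉ Set.range n
  hpq : Nat.gcd p q = 1

/-- the numerical semigroup `S₁ = ⟨m₁, …, m_d⟩`. -/
def Gluing.S₁ (G : Gluing) : Set ℕ := (AddSubmonoid.closure (Set.range G.m) : Set ℕ)

/-- the numerical semigroup `S₂ = ⟨n₁, …, n_k⟩`. -/
def Gluing.S₂ (G : Gluing) : Set ℕ := (AddSubmonoid.closure (Set.range G.n) : Set ℕ)

/-- the glued numerical semigroup `S = ⟨q m₁, …, q m_d, p n₁, …, p n_k⟩`. -/
def Gluing.S (G : Gluing) : Set ℕ :=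
  (AddSubmonoid.closure
    ((fun x => G.q * x) '' Set.range G.m ∪ (fun x => G.p * x) '' Set.range G.n) : Set ℕ)

/-- the smallest generator `m₁` of `S₁`. -/
def Gluing.m₁ (G : Gluing) : ℕ := G.m ⟨0, G.hd⟩

/-- the smallest generator `n₁` of `S₂`. -/
def Gluing.n₁ (G : Gluing) : ℕ := G.n ⟨0, G.hk⟩

/-- the gluing is specific if `ord_{S₂}(q) + l_q(S₂) ≤ ord_{S₁}(p)`. -/
def Gluing.Specific (G : Gluing) : Prop := ordS G.S₂ G.q + lS G.S₂ G.q ≤ ordS G.S₁ G.p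

/-- the gluing is nice if `q = a n₁` for some `1 < a ≤ ord_{S₁}(p)`. -/
def Gluing.Nice (G : Gluing) : Prop := ∃ a : ℕ, 1 < a ∧ a ≤ ordS G.S₁ G.p ∧ G.q = a * G.n₁


/-! ### Auxiliary machinery -/

section AuxGeneric

variable {T : Set ℕ}

lemma nM_zero' (T : Set ℕ) : nM T 0 = T := rfl

lemma nM_succ' (T : Set ℕ) (n : ℕ) : nM T (n + 1) = (T \ {0}) + nM T n := rfl

lemma mem_nM_succ_iff {n x} :
    x ∈ nM T (n + 1) ↔ ∃ a ∈ T \ {0}, ∃ b ∈ nM T n, a + b = x := by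
  rw [nM_succ']; exact Set.mem_add

lemma nM_subset (h0 : (0 : ℕ) ∈ T) (hadd : ∀ a ∈ T, ∀ b ∈ T, a + b ∈ T) :
    ∀ n, nM T n ⊆ T
  | 0 => subset_rfl
  | (n + 1) => by
      intro x hx
      rcases mem_nM_succ_iff.mp hx with ⟨a, ha, b, hb, rfl⟩
      exact hadd a ha.1 b (nM_subset h0 hadd n hb)

lemma mem_nM_succ_of (ha : a ∈ T) (ha0 : a ≠ 0) {n x} (hx : x ∈ nM T n) :
    a + x ∈ nM T (n + 1) :=
  mem_nM_succ_iff.mpr ⟨a, ⟨ha, ha0⟩, x, hx, rfl⟩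

lemma nM_succ_subset (h0 : (0 : ℕ) ∈ T) (hadd : ∀ a ∈ T, ∀ b ∈ T, a + b ∈ T) :
    ∀ n, nM T (n + 1) ⊆ nM T n
  | 0 => by
      intro x hx
      rcases mem_nM_succ_iff.mp hx with ⟨a, ha, b, hb, rfl⟩
      exact hadd a ha.1 b hb
  | (n + 1) => by
      intro x hx
      rcases mem_nM_succ_iff.mp hx with ⟨a, ha, b, hb, rfl⟩
      exact mem_nM_succ_of ha.1 ha.2 (nM_succ_subset h0 hadd n hb)

lemma nM_mono (h0 : (0 : ℕ) ∈ T) (hadd : ∀ a ∈ T, ∀ b ∈ T, a + b ∈ T)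
    {k n : ℕ} (h : k ≤ n) : nM T n ⊆ nM T k := by
  induction n with
  | zero => simp_all
  | succ n ih =>
      rcases Nat.lt_or_ge k (n + 1) with h' | h'
      · exact (nM_succ_subset h0 hadd n).trans (ih (by omega))
      · have : k = n + 1 := by omega
        subst this; exact subset_rfl

lemma list_length_le_sum {l : List ℕ} (h : ∀ y ∈ l, y ≠ 0) : l.length ≤ l.sum := by
  induction l with
  | nil => simp
  | cons a l ih =>
      simp only [List.length_cons, List.sum_cons]
      have ha := h a (by simp)
      have := ih (fun y hy => h y (by simp [hy]))
      omega

lemma mem_nM_iff_list (T : Set ℕ) :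
    ∀ n x, x ∈ nM T n ↔
      ∃ l : List ℕ, l.length = n ∧ (∀ y ∈ l, y ∈ T ∧ y ≠ 0) ∧ ∃ s ∈ T, x = l.sum + s
  | 0, x => by
      constructor
      · intro hx; exact ⟨[], rfl, by simp, x, hx, by simp⟩
      · rintro ⟨l, hl, _, s, hs, rfl⟩
        rw [List.length_eq_zero_iff] at hl; subst hl; simpa [nM_zero'] using hs
  | (n + 1), x => by
      constructor
      · intro hx
        rcases mem_nM_succ_iff.mp hx with ⟨a, ha, b, hb, rfl⟩
        rcases (mem_nM_iff_list T n b).mp hb with ⟨l, hl, hmem, s, hs, rfl⟩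
        exact ⟨a :: l, by simp [hl], by
          intro y hy
          rcases List.mem_cons.mp hy with rfl | hy
          · exact ⟨ha.1, ha.2⟩
          · exact hmem y hy, s, hs, by simp [add_assoc]⟩
      · rintro ⟨l, hl, hmem, s, hs, rfl⟩
        rcases l with _ | ⟨a, l⟩
        · simp at hl
        · simp only [List.length_cons, Nat.succ_inj] at hl
          have hmem' : ∀ y ∈ l, y ∈ T ∧ y ≠ 0 := fun y hy => hmem y (by simp [hy])
          have hb : l.sum + s ∈ nM T n := (mem_nM_iff_list T n _).mpr ⟨l, hl, hmem', s, hs, rfl⟩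
          have ha := hmem a (by simp)
          simpa [add_assoc] using mem_nM_succ_of ha.1 ha.2 hb

lemma le_of_mem_nM {n x : ℕ} (h : x ∈ nM T n) : n ≤ x := by
  rcases (mem_nM_iff_list T n x).mp h with ⟨l, hl, hmem, s, _, rfl⟩
  have := list_length_le_sum (fun y hy => (hmem y hy).2)
  omega

lemma bddAbove_nM_set (x : ℕ) : BddAbove {t | x ∈ nM T t} :=
  ⟨x, fun _ ht => le_of_mem_nM ht⟩

lemma mem_nM_ordS {x : ℕ} (hx : x ∈ T) : x ∈ nM T (ordS T x) :=
  Nat.sSup_mem (s := {t | x ∈ nM T t}) ⟨0, hx⟩ (bddAbove_nM_set x)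

lemma le_ordS {n x : ℕ} (h : x ∈ nM T n) : n ≤ ordS T x :=
  le_csSup (bddAbove_nM_set x) h

/-- The key pigeonhole lemma: subtracting `z ∈ T` from an element of `nM T K`
(with `z ≤ K`) lands in `nM T (K - z)`. -/
lemma eplus (h0 : (0 : ℕ) ∈ T) (hadd : ∀ a ∈ T, ∀ b ∈ T, a + b ∈ T)
    {z K x : ℕ} (hz : z ∈ T) (hz0 : z ≠ 0) (hx : x ∈ nM T K) (hzK : z ≤ K) :
    x - z ∈ nM T (K - z) := by
  rcases (mem_nM_iff_list T K x).mp hx with ⟨l, hlen, hmem, s₀, hs₀, rfl⟩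
  have hzpos : 0 < z := Nat.pos_of_ne_zero hz0
  -- pigeonhole on prefix sums mod z
  have hmaps : ∀ i ∈ Finset.range (z + 1), ((l.take i).sum % z) ∈ Finset.range z := by
    intro i _; exact Finset.mem_range.mpr (Nat.mod_lt _ hzpos)
  obtain ⟨i, hi, j, hj, hij, hfij⟩ :=
    Finset.exists_ne_map_eq_of_card_lt_of_maps_to
      (by simp [Finset.card_range]) hmaps
  -- wlog i < j
  wlog hlt : i < j generalizing i j
  · exact this j hj i hi hij.symm hfij.symm (by omega)
  simp only [Finset.mem_range] at hi hj
  have hiK : i ≤ l.length := by omega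
  have hjK : j ≤ l.length := by omega
  -- middle block
  set mid : List ℕ := (l.drop i).take (j - i) with hmid
  have htj : l.take j = l.take i ++ mid := by
    rw [hmid, ← List.take_add]
    congr 1; omega
  have hsumj : (l.take j).sum = (l.take i).sum + mid.sum := by
    rw [htj, List.sum_append]
  have hdvd : z ∣ mid.sum := by
    have h1 : (l.take i).sum ≡ (l.take i).sum + mid.sum [MOD z] := by
      unfold Nat.ModEq
      rw [← hsumj]; exact hfij
    have := (Nat.modEq_iff_dvd' (Nat.le_add_right _ _)).mp h1
    simpa using this
  have hmidmem : ∀ y ∈ mid, y ∈ T ∧ y ≠ 0 := by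
    intro y hy
    exact hmem y (List.mem_of_mem_drop (List.mem_of_mem_take hy))
  have hmidlen : mid.length = j - i := by
    rw [hmid, List.length_take, List.length_drop]; omega
  have hmidpos : 0 < mid.sum := by
    have h1 : mid.length ≤ mid.sum := list_length_le_sum (fun y hy => (hmidmem y hy).2)
    omega
  obtain ⟨c, hc⟩ := hdvd
  obtain ⟨c', rfl⟩ : ∃ c', c = c' + 1 := by
    rcases Nat.eq_zero_or_pos c with rfl | h
    · simp at hc; omega
    · exact ⟨c - 1, by omega⟩
  -- decompose l
  have hldecomp : l = l.take i ++ mid ++ l.drop j := by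
    rw [← htj, List.take_append_drop]
  -- the new list
  set L' : List ℕ := List.replicate c' z ++ (l.take i ++ l.drop j) with hL'
  have hL'mem : ∀ y ∈ L', y ∈ T ∧ y ≠ 0 := by
    intro y hy
    rw [hL'] at hy
    rcases List.mem_append.mp hy with hy | hy
    · rw [List.eq_of_mem_replicate hy]; exact ⟨hz, hz0⟩
    · rcases List.mem_append.mp hy with hy | hy
      · exact hmem y (List.mem_of_mem_take hy)
      · exact hmem y (List.mem_of_mem_drop hy)
  have hsum_l : l.sum = (l.take i).sum + mid.sum + (l.drop j).sum := by
    nth_rewrite 1 [hldecomp]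
    simp [List.sum_append, add_assoc]
  have hL'sum : L'.sum = c' * z + ((l.take i).sum + (l.drop j).sum) := by
    rw [hL', List.sum_append, List.sum_append, List.sum_replicate, smul_eq_mul]
  have hzc : mid.sum = c' * z + z := by rw [hc]; ring
  have hval : l.sum + s₀ - z = L'.sum + s₀ := by omega
  have hL'len : L'.length = c' + (i + (l.length - j)) := by
    rw [hL']
    simp [List.length_append, List.length_replicate, List.length_take, List.length_drop]
    omega
  have hmemL' : l.sum + s₀ - z ∈ nM T L'.length :=
    (mem_nM_iff_list T _ _).mpr ⟨L', rfl, hL'mem, s₀, hs₀, hval⟩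
  have hge : K - z ≤ L'.length := by
    rw [hL'len]; omega
  exact nM_mono h0 hadd hge hmemL'

end AuxGeneric

section AuxExt

/-- the extension semigroup as an explicit set. -/
def ExtSet (T₁ : Set ℕ) (p q : ℕ) : Set ℕ := {s | ∃ a t, a ∈ T₁ ∧ s = q * a + t * p}

variable {T₁ : Set ℕ} {p q : ℕ}

lemma ExtSet_zero (h01 : (0 : ℕ) ∈ T₁) : (0 : ℕ) ∈ ExtSet T₁ p q :=
  ⟨0, 0, h01, by ring⟩

lemma ExtSet_add (hadd1 : ∀ a ∈ T₁, ∀ b ∈ T₁, a + b ∈ T₁) :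
    ∀ a ∈ ExtSet T₁ p q, ∀ b ∈ ExtSet T₁ p q, a + b ∈ ExtSet T₁ p q := by
  rintro _ ⟨a₁, t₁, ha₁, rfl⟩ _ ⟨a₂, t₂, ha₂, rfl⟩
  exact ⟨a₁ + a₂, t₁ + t₂, hadd1 _ ha₁ _ ha₂, by ring⟩

lemma p_mem_ExtSet (h01 : (0 : ℕ) ∈ T₁) : p ∈ ExtSet T₁ p q :=
  ⟨0, 1, h01, by ring⟩

lemma qmul_mem_ExtSet {a : ℕ} (ha : a ∈ T₁) : q * a ∈ ExtSet T₁ p q :=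
  ⟨a, 0, ha, by ring⟩

lemma mem_nM_ExtSet_iff (h01 : (0 : ℕ) ∈ T₁) (hadd1 : ∀ a ∈ T₁, ∀ b ∈ T₁, a + b ∈ T₁)
    (hp0 : p ≠ 0) (hq0 : q ≠ 0) :
    ∀ n x, x ∈ nM (ExtSet T₁ p q) n ↔
      ∃ a t, a ∈ nM T₁ (n - t) ∧ x = q * a + t * p
  | 0, x => by
      have h00 : ∀ t : ℕ, nM T₁ (0 - t) = T₁ := fun t => by
        rw [Nat.zero_sub]; rfl
      constructor
      · rintro ⟨a, t, ha, rfl⟩; exact ⟨a, t, by rw [h00]; exact ha, rfl⟩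
      · rintro ⟨a, t, ha, rfl⟩; rw [h00] at ha; exact ⟨a, t, ha, rfl⟩
  | (n + 1), x => by
      constructor
      · intro hx
        rcases mem_nM_succ_iff.mp hx with ⟨m', hm', b, hb, rfl⟩
        rcases (mem_nM_ExtSet_iff h01 hadd1 hp0 hq0 n b).mp hb with ⟨a, t, ha, rfl⟩
        rcases hm'.1 with ⟨a', t', ha', rfl⟩
        rcases Nat.eq_zero_or_pos t' with rfl | ht'
        · -- m' = q * a', a' ≠ 0
          have ha'0 : a' ≠ 0 := by
            rintro rfl; exact hm'.2 (by simp)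
          refine ⟨a' + a, t, ?_, by ring⟩
          have h1 : a' + a ∈ nM T₁ (n - t + 1) := mem_nM_succ_of ha' ha'0 ha
          exact nM_mono h01 hadd1 (by omega) h1
        · refine ⟨a' + a, t' + t, ?_, by ring⟩
          have h1 : a' + a ∈ nM T₁ (n - t) := by
            -- a' ∈ T₁, adding a T₁ element preserves nM level
            rcases (mem_nM_iff_list T₁ (n - t) a).mp ha with ⟨l, hl, hmem, s, hs, rfl⟩
            exact (mem_nM_iff_list T₁ (n - t) _).mpr
              ⟨l, hl, hmem, a' + s, hadd1 _ ha' _ hs, by ring⟩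
          exact nM_mono h01 hadd1 (by omega) h1
      · rintro ⟨a, t, ha, rfl⟩
        rcases Nat.eq_zero_or_pos t with rfl | ht
        · -- t = 0 : a ∈ nM T₁ (n+1)
          simp only [Nat.sub_zero] at ha
          rcases mem_nM_succ_iff.mp ha with ⟨a₁, ha₁, a₂, ha₂, rfl⟩
          have h1 : q * a₂ ∈ nM (ExtSet T₁ p q) n :=
            (mem_nM_ExtSet_iff h01 hadd1 hp0 hq0 n _).mpr ⟨a₂, 0, by simpa using ha₂, by ring⟩
          have h2 : q * a₁ ∈ ExtSet T₁ p q := qmul_mem_ExtSet ha₁.1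
          have h3 : q * a₁ ≠ 0 := Nat.mul_ne_zero hq0 ha₁.2
          have := mem_nM_succ_of h2 h3 h1
          convert this using 1
          ring
        · -- t ≥ 1
        
          obtain ⟨t', rfl⟩ : ∃ t', t = t' + 1 := ⟨t - 1, by omega⟩
          have h1 : q * a + t' * p ∈ nM (ExtSet T₁ p q) n :=
            (mem_nM_ExtSet_iff h01 hadd1 hp0 hq0 n _).mpr
              ⟨a, t', nM_mono h01 hadd1 (by omega) ha, rfl⟩
          have := mem_nM_succ_of (p_mem_ExtSet h01 (q := q)) hp0 h1
          convert this using 1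
          ring


/-- The crucial step: `ord_S(s+p) = ord_S(s) + 1` for the extension. -/
lemma ordS_ExtSet_step (h01 : (0 : ℕ) ∈ T₁) (hadd1 : ∀ a ∈ T₁, ∀ b ∈ T₁, a + b ∈ T₁)
    (hp1 : p ∈ T₁) (hp0 : p ≠ 0) (hq1 : 1 < q) (hpq : Nat.Coprime p q) (hlt : p < q)
    {s : ℕ} (hs : s ∈ ExtSet T₁ p q) :
    ordS (ExtSet T₁ p q) (s + p) = ordS (ExtSet T₁ p q) s + 1 := by
  have hq0 : q ≠ 0 := by omega
  set E := ExtSet T₁ p q with hE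
  have hE0 : (0 : ℕ) ∈ E := ExtSet_zero h01
  have hEadd : ∀ a ∈ E, ∀ b ∈ E, a + b ∈ E := ExtSet_add hadd1
  have hpE : p ∈ E := p_mem_ExtSet h01
  have hsp : s + p ∈ E := hEadd s hs p hpE
  set L := ordS E (s + p) with hL
  -- lower bound
  have h1 : ordS E s + 1 ≤ L := by
    have h0' := mem_nM_succ_of hpE hp0 (mem_nM_ordS hs)
    rw [add_comm p s] at h0'
    exact le_ordS h0'
  -- upper bound : s ∈ nM E (L - 1)
  have hmem : s + p ∈ nM E L := mem_nM_ordS hsp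
  rcases (mem_nM_ExtSet_iff h01 hadd1 hp0 hq0 L (s + p)).mp hmem with ⟨a, t, ha, heq⟩
  rcases Nat.eq_zero_or_pos t with rfl | ht
  · -- t = 0 case
    have heq' : s + p = q * a := by omega
    simp only [Nat.sub_zero] at ha
    obtain ⟨b, t', hb, hsb⟩ := hs
    have hexp : (t' + 1) * p = t' * p + p := by ring
    have key : q * a = q * b + (t' + 1) * p := by omega
    have hdvd : q ∣ (t' + 1) * p :=
      (Nat.dvd_add_right (dvd_mul_right q b)).mp ⟨a, key.symm⟩
    have hdvd2 : q ∣ t' + 1 := (hpq.symm).dvd_of_dvd_mul_right hdvd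
    obtain ⟨j, hj⟩ := hdvd2
    obtain ⟨j', rfl⟩ : ∃ j', j = j' + 1 := by
      rcases Nat.eq_zero_or_pos j with rfl | h
      · simp at hj
      · exact ⟨j - 1, by omega⟩
    have hab : a = b + (j' + 1) * p := by
      have h5 : q * a = q * (b + (j' + 1) * p) := by
        rw [key, hj]; ring
      exact Nat.eq_of_mul_eq_mul_left (by omega) h5
    set a' := b + j' * p with ha'def
    have ha' : a = a' + p := by rw [hab, ha'def]; ring
    by_cases hLq : L < q
    · -- small L : use the representation of s directly
      have ht'L : L - 1 ≤ t' := by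
        have h6 : q * 1 ≤ q * (j' + 1) := Nat.mul_le_mul_left q (by omega)
        omega
      have hsmem : s ∈ nM E (L - 1) :=
        (mem_nM_ExtSet_iff h01 hadd1 hp0 hq0 (L - 1) s).mpr
          ⟨b, t', by rw [show (L - 1) - t' = 0 by omega]; exact hb, hsb⟩
      have := le_ordS hsmem
      omega
    · -- q ≤ L : use eplus
      have hpL : p ≤ L := by omega
      have ha'mem : a' ∈ nM T₁ (L - p) := by
        have : a' = a - p := by omega
        rw [this]
        exact eplus h01 hadd1 hp1 hp0 ha hpL
      have hs_eq : s = q * a' + (q - 1) * p := by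
        have h3 : s + p = q * a' + q * p := by
          rw [heq', ha']; ring
        have h4 : (q - 1) * p + p = q * p := by
          have hq' : q - 1 + 1 = q := by omega
          calc (q - 1) * p + p = ((q - 1) + 1) * p := by ring
            _ = q * p := by rw [hq']
        omega
      have hidx : (L - 1) - (q - 1) ≤ L - p := by omega
      have hsmem : s ∈ nM E (L - 1) :=
        (mem_nM_ExtSet_iff h01 hadd1 hp0 hq0 (L - 1) s).mpr
          ⟨a', q - 1, nM_mono h01 hadd1 hidx ha'mem, hs_eq⟩
      have := le_ordS hsmem
      omega
  · -- t ≥ 1 case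
    obtain ⟨t', rfl⟩ : ∃ t', t = t' + 1 := ⟨t - 1, by omega⟩
    have hexp : (t' + 1) * p = t' * p + p := by ring
    have hs_eq : s = q * a + t' * p := by omega
    have hidx : (L - 1) - t' = L - (t' + 1) := by omega
    have hsmem : s ∈ nM E (L - 1) :=
      (mem_nM_ExtSet_iff h01 hadd1 hp0 hq0 (L - 1) s).mpr
        ⟨a, t', by rw [hidx]; exact ha, hs_eq⟩
    have := le_ordS hsmem
    omega

lemma mult_ExtSet (h01 : (0 : ℕ) ∈ T₁) (hp0 : p ≠ 0) (hlt : p < q) :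
    mult (ExtSet T₁ p q) = p := by
  unfold mult
  apply le_antisymm
  · exact Nat.sInf_le ⟨p_mem_ExtSet h01, hp0⟩
  · refine le_csInf ⟨p, ⟨p_mem_ExtSet h01, hp0⟩⟩ ?_
    rintro b ⟨⟨a, t, _, rfl⟩, hb0⟩
    rcases Nat.eq_zero_or_pos t with rfl | ht
    · have ha0 : 0 < a := by
        rcases Nat.eq_zero_or_pos a with rfl | h
        · simp at hb0
        · exact h
      have : q * 1 ≤ q * a := Nat.mul_le_mul_left q ha0
      omega
    · have : 1 * p ≤ t * p := Nat.mul_le_mul_right p ht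
      omega

lemma ExtSet_cofinal (h01 : (0 : ℕ) ∈ T₁) (hadd1 : ∀ a ∈ T₁, ∀ b ∈ T₁, a + b ∈ T₁)
    (hp0 : p ≠ 0) (hq1 : 1 < q) (hpq : Nat.Coprime p q)
    {C : ℕ} (hC : ∀ a, C ≤ a → a ∈ T₁) (k : ℕ) :
    ∃ N, ∀ n, N ≤ n → n ∈ nM (ExtSet T₁ p q) k := by
  haveI : NeZero q := ⟨by omega⟩
  have hmem : ∀ nn, q * C + q * p ≤ nn → nn ∈ ExtSet T₁ p q := by
    intro nn hnn
    have hu : IsUnit (p : ZMod q) := by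
      rw [ZMod.isUnit_iff_coprime]; exact hpq
    set t := ((nn : ZMod q) * (p : ZMod q)⁻¹).val with htdef
    have htq : t < q := ZMod.val_lt _
    have hcast : ((t * p : ℕ) : ZMod q) = (nn : ZMod q) := by
      push_cast
      rw [htdef, ZMod.natCast_val, ZMod.cast_id, mul_assoc,
        ZMod.inv_mul_of_unit _ hu, mul_one]
    have ht1 : t * p ≤ (q - 1) * p := Nat.mul_le_mul_right p (by omega)
    have ht2 : (q - 1) * p + p = q * p := by
      have hq' : q - 1 + 1 = q := by omega
      calc (q - 1) * p + p = ((q - 1) + 1) * p := by ring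
        _ = q * p := by rw [hq']
    have htp_le : t * p ≤ nn := by omega
    have hdvd : q ∣ nn - t * p := by
      have h7 := (ZMod.natCast_eq_natCast_iff _ _ _).mp hcast
      exact (Nat.modEq_iff_dvd' htp_le).mp h7
    obtain ⟨a, hA⟩ := hdvd
    have haC : C ≤ a := by
      have h8 : q * C ≤ q * a := by omega
      exact Nat.le_of_mul_le_mul_left h8 (by omega)
    exact ⟨a, t, hC a haC, by omega⟩
  refine ⟨q * C + q * p + k * p, fun n hn => ?_⟩
  have h9 : n - k * p ∈ ExtSet T₁ p q := hmem _ (by omega)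
  apply (mem_nM_iff_list (ExtSet T₁ p q) k n).mpr
  refine ⟨List.replicate k p, by simp, ?_, n - k * p, h9, ?_⟩
  · intro y hy
    rw [List.eq_of_mem_replicate hy]
    exact ⟨p_mem_ExtSet h01, hp0⟩
  · rw [List.sum_replicate, smul_eq_mul]
    omega

lemma hilb_mono_aux {T : Set ℕ} (h0 : (0 : ℕ) ∈ T) (hadd : ∀ a ∈ T, ∀ b ∈ T, a + b ∈ T)
    {p : ℕ} (hpT : p ∈ T) (hp0 : p ≠ 0)
    (hord : ∀ s ∈ T, ordS T (s + p) = ordS T s + 1)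
    (hcof : ∀ k, ∃ N, ∀ n, N ≤ n → n ∈ nM T k) (t : ℕ) :
    HilbS T t ≤ HilbS T (t + 1) := by
  unfold HilbS
  obtain ⟨N, hN⟩ := hcof (t + 2)
  have hBfin : (nM T (t + 1) \ nM T (t + 2)).Finite := by
    apply Set.Finite.subset (Set.finite_Iio N)
    intro x hx
    rw [Set.mem_Iio]
    by_contra hxN
    push_neg at hxN
    exact hx.2 (hN x hxN)
  have himg : (fun x => x + p) '' (nM T t \ nM T (t + 1)) ⊆ nM T (t + 1) \ nM T (t + 2) := by
    rintro _ ⟨x, ⟨hx1, hx2⟩, rfl⟩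
    show x + p ∈ nM T (t + 1) \ nM T (t + 2)
    have hxT : x ∈ T := nM_subset h0 hadd t hx1
    have hordx : ordS T x = t := by
      have hle := le_ordS hx1
      have hle2 : ordS T x ≤ t := by
        by_contra hgt
        push_neg at hgt
        exact hx2 (nM_mono h0 hadd hgt (mem_nM_ordS hxT))
      omega
    have h3 := hord x hxT
    rw [hordx] at h3
    constructor
    · have h4 := mem_nM_ordS (hadd x hxT p hpT)
      rw [h3] at h4
      exact h4
    · intro hmem'
      have := le_ordS hmem'
      omega
  calc (nM T t \ nM T (t + 1)).ncard
      = ((fun x => x + p) '' (nM T t \ nM T (t + 1))).ncard :=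
        (Set.ncard_image_of_injective _ (add_left_injective p)).symm
    _ ≤ (nM T (t + 1) \ nM T (t + 2)).ncard := Set.ncard_le_ncard himg hBfin

end AuxExt

/-- let `S = ⟨qm₁, …, qm_d, p⟩` be an extension of the numerical
semigroup `S₁ = ⟨m₁, …, m_d⟩` (so `q > 1`, `p ∈ S₁ \ {m₁, …, m_d}`, `gcd(p,q)=1`).
If `p < q` then `m(S) = p` and `ord_S(s+p) = ord_S(s)+1` for all `s ∈ S` (so by
García's criterion `G(S)` is Cohen–Macaulay), and consequently the Hilbert
function of `S` is non-decreasing. -/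
theorem stmt19 (d : ℕ) (hd : 0 < d) (m : Fin d → ℕ) (hm : StrictMono m)
    (hmin : ∀ i, m i ∉ AddSubmonoid.closure (Set.range m \ {m i}))
    (hnum : IsNumSgp (AddSubmonoid.closure (Set.range m) : Set ℕ))
    (p q : ℕ) (hq : 1 < q) (hp : p ∈ AddSubmonoid.closure (Set.range m))
    (hpm : p ∉ Set.range m) (hpq : Nat.gcd p q = 1)
    (S : Set ℕ)
    (hS : S = (AddSubmonoid.closure ((fun x => q * x) '' Set.range m ∪ {p}) : Set ℕ))
    (hlt : p < q) :
    mult S = p ∧ (∀ s ∈ S, ordS S (s + p) = ordS S s + 1) ∧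
      ∀ t : ℕ, HilbS S t ≤ HilbS S (t + 1) := by
  subst hS
  set T₁ : Set ℕ := (AddSubmonoid.closure (Set.range m) : Set ℕ) with hT₁
  have h01 : (0 : ℕ) ∈ T₁ := AddSubmonoid.zero_mem _
  have hadd1 : ∀ a ∈ T₁, ∀ b ∈ T₁, a + b ∈ T₁ := fun a ha b hb =>
    AddSubmonoid.add_mem _ ha hb
  have hp0 : p ≠ 0 := by
    rintro rfl
    rw [Nat.gcd_zero_left] at hpq
    omega
  have hq0 : q ≠ 0 := by omega
  have hpq' : Nat.Coprime p q := hpq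
  have hpT : p ∈ T₁ := hp
  have hSeq : (AddSubmonoid.closure ((fun x => q * x) '' Set.range m ∪ {p}) : Set ℕ)
      = ExtSet T₁ p q := by
    ext s
    constructor
    · intro hs
      induction hs using AddSubmonoid.closure_induction with
      | mem x hx =>
          rcases hx with ⟨mi, hmi, rfl⟩ | hx
          · exact ⟨mi, 0, AddSubmonoid.subset_closure hmi, by ring⟩
          · rw [Set.mem_singleton_iff] at hx
            subst hx
            exact ⟨0, 1, h01, by ring⟩
      | zero => exact ExtSet_zero h01
      | add x y hx hy ihx ihy => exact ExtSet_add hadd1 x ihx y ihy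
    · rintro ⟨a, t, ha, rfl⟩
      have hqa : q * a ∈ AddSubmonoid.closure ((fun x => q * x) '' Set.range m ∪ {p}) := by
        induction ha using AddSubmonoid.closure_induction with
        | mem x hx => exact AddSubmonoid.subset_closure (Or.inl ⟨x, hx, rfl⟩)
        | zero => simpa using AddSubmonoid.zero_mem _
        | add x y hx hy ihx ihy =>
            rw [Nat.mul_add]
            exact AddSubmonoid.add_mem _ ihx ihy
      have htp : t * p ∈ AddSubmonoid.closure ((fun x => q * x) '' Set.range m ∪ {p}) := by
        have hpmem : p ∈ AddSubmonoid.closure ((fun x => q * x) '' Set.range m ∪ {p}) :=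
          AddSubmonoid.subset_closure (Or.inr rfl)
        simpa [nsmul_eq_mul] using AddSubmonoid.nsmul_mem _ hpmem t
      exact AddSubmonoid.add_mem _ hqa htp
  rw [hSeq]
  obtain ⟨Cb, hCb⟩ := Set.Finite.bddAbove hnum.2.2
  have hC : ∀ a, Cb + 1 ≤ a → a ∈ T₁ := by
    intro a ha
    by_contra h
    have : a ≤ Cb := hCb h
    omega
  have hord : ∀ s ∈ ExtSet T₁ p q,
      ordS (ExtSet T₁ p q) (s + p) = ordS (ExtSet T₁ p q) s + 1 :=
    fun s hs => ordS_ExtSet_step h01 hadd1 hpT hp0 hq hpq' hlt hs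
  refine ⟨mult_ExtSet h01 hp0 hlt, hord, ?_⟩
  intro t
  exact hilb_mono_aux (ExtSet_zero h01) (ExtSet_add hadd1) (p_mem_ExtSet h01) hp0 hord
    (fun k => ExtSet_cofinal h01 hadd1 hp0 hq hpq' hC k) t
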